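/- Let (X,τ,d) be a pre-e.pm.t. space. Then there exist an extended metric-topological space (X̌,τ̌,ď) and a surjective continuous-short map c : (X,τ,d) → (X̌,τ̌,ď) with the following universal property: for every extended metric-topological space (Y,τ_Y,d_Y) and every continuous-short map φ : (X,τ,d) → (Y,τ_Y,d_Y) there exists a unique continuous-short map φ̃ : (X̌,τ̌,ď) → (Y,τ_Y,d_Y) with φ̃ ∘ c = φ. Moreover, for every extended metric-topological space (Y,τ_Y,d_Y), the assignment φ ↦ φ̃ is a bijection from the set of continuous-short maps (X,τ,d) → (Y,τ_Y,d_Y) onto the set of continuous-short maps (X̌,τ̌,ď) → (Y,τ_Y,d_Y). -/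

import Mathlib

open scoped ENNReal

universe u v w

/-- An extended pseudodistance on `X`. -/
structure IsExtPseudoDist {X : Type*} (d : X → X → ℝ≥0∞) : Prop where
  refl : ∀ x, d x x = 0
  symm : ∀ x y, d x y = d y x
  triangle : ∀ x y z, d x y ≤ d x z + d z y

/-- An extended distance on `X`. -/
structure IsExtDist {X : Type*} (d : X → X → ℝ≥0∞) : Prop where
  eq_zero_iff : ∀ x y, d x y = 0 ↔ x = y
  symm : ∀ x y, d x y = d y x
  triangle : ∀ x y z, d x y ≤ d x z + d z y

/-- `LIP_{b,1}(X,τ,d)`: bounded `τ`-continuous functions `f : X → ℝ` with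
`|f x - f y| ≤ d x y`. -/
def Lip1 {X : Type*} (τ : TopologicalSpace X) (d : X → X → ℝ≥0∞) : Set (X → ℝ) :=
  {f | @Continuous X ℝ τ _ f ∧ (∃ C : ℝ, ∀ x, |f x| ≤ C) ∧
    ∀ x y, ENNReal.ofReal |f x - f y| ≤ d x y}

/-- `(X,τ,d)` is an extended metric-topological space. -/
def IsEMT {X : Type*} (τ : TopologicalSpace X) (d : X → X → ℝ≥0∞) : Prop :=
  IsExtDist d ∧
  τ = (⨅ f ∈ Lip1 τ d, TopologicalSpace.induced f inferInstance) ∧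
  (∀ x y, d x y = ⨆ f ∈ Lip1 τ d, ENNReal.ofReal |f x - f y|)

/-- A continuous-short map between (pre-)extended (pseudo)metric-topological spaces. -/
def ContinuousShort {X Y : Type*} (τX : TopologicalSpace X) (dX : X → X → ℝ≥0∞)
    (τY : TopologicalSpace Y) (dY : Y → Y → ℝ≥0∞) (φ : X → Y) : Prop :=
  @Continuous X Y τX τY φ ∧ ∀ x y, dY (φ x) (φ y) ≤ dX x y

noncomputable section EmtAux
open TopologicalSpace

variable {X : Type u} (τ : TopologicalSpace X) (d : X → X → ℝ≥0∞)

/-- The equivalence identifying points not separated by `Lip1`. -/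
def emtSetoid : Setoid X where
  r x y := ∀ f ∈ Lip1 τ d, f x = f y
  iseqv := ⟨fun _ _ _ => rfl, fun h f hf => (h f hf).symm,
    fun h1 h2 f hf => (h1 f hf).trans (h2 f hf)⟩

def emtMk : X → Quotient (emtSetoid τ d) := Quotient.mk _

def emtDAux (x y : X) : ℝ≥0∞ := ⨆ f ∈ Lip1 τ d, ENNReal.ofReal |f x - f y|

def emtD : Quotient (emtSetoid τ d) → Quotient (emtSetoid τ d) → ℝ≥0∞ :=
  Quotient.lift₂ (emtDAux τ d) (fun a b a' b' ha hb => by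
    unfold emtDAux
    exact iSup_congr fun f => iSup_congr fun hf => by rw [ha f hf, hb f hf])

def emtG : Set (Quotient (emtSetoid τ d) → ℝ) := {g | g ∘ emtMk τ d ∈ Lip1 τ d}

def emtT : TopologicalSpace (Quotient (emtSetoid τ d)) :=
  ⨅ g ∈ emtG τ d, induced g inferInstance

lemma emtD_mk (x y : X) : emtD τ d (emtMk τ d x) (emtMk τ d y) = emtDAux τ d x y := rfl

lemma emtDAux_le (x y : X) : emtDAux τ d x y ≤ d x y :=
  iSup₂_le fun _ hf => hf.2.2 x y

lemma emtMk_surjective : Function.Surjective (emtMk τ d) := Quotient.exists_rep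

/-- `c` is continuous-short. -/
lemma emtMk_cs : ContinuousShort τ d (emtT τ d) (emtD τ d) (emtMk τ d) := by
  constructor
  · rw [continuous_iff_le_induced, emtT, induced_iInf]
    refine le_iInf fun g => ?_
    rw [induced_iInf]
    refine le_iInf fun hg => ?_
    rw [induced_compose]
    exact continuous_iff_le_induced.mp hg.1
  · intro x y
    exact (emtD_mk τ d x y).le.trans (emtDAux_le τ d x y)

/-- Descent of a `Lip1` function to the quotient. -/
def emtLift (f : X → ℝ) (hf : f ∈ Lip1 τ d) : Quotient (emtSetoid τ d) → ℝ :=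
  Quotient.lift f (fun a b hab => hab f hf)

lemma emtLift_comp (f : X → ℝ) (hf : f ∈ Lip1 τ d) :
    emtLift τ d f hf ∘ emtMk τ d = f := rfl

lemma emtLift_mem (f : X → ℝ) (hf : f ∈ Lip1 τ d) : emtLift τ d f hf ∈ emtG τ d := by
  show emtLift τ d f hf ∘ emtMk τ d ∈ Lip1 τ d
  rw [emtLift_comp]; exact hf

/-- The key identification: `Lip1` of the quotient equals `emtG`. -/
lemma emtLip1_eq : Lip1 (emtT τ d) (emtD τ d) = emtG τ d := by
  ext g
  constructor
  · rintro ⟨hc, ⟨C, hC⟩, hl⟩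
    refine ⟨?_, ⟨C, fun x => hC _⟩, fun x y => ?_⟩
    · exact @Continuous.comp X (Quotient (emtSetoid τ d)) ℝ τ (emtT τ d) _ (emtMk τ d) g
        hc (emtMk_cs τ d).1
    · exact (hl (emtMk τ d x) (emtMk τ d y)).trans ((emtMk_cs τ d).2 x y)
  · rintro hg
    obtain ⟨hc, ⟨C, hC⟩, hl⟩ := id hg
    refine ⟨?_, ⟨C, fun z => ?_⟩, fun z w => ?_⟩
    · rw [continuous_iff_le_induced]
      exact iInf_le_of_le g (iInf_le_of_le hg le_rfl)
    · obtain ⟨x, rfl⟩ := emtMk_surjective τ d z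
      exact hC x
    · obtain ⟨x, rfl⟩ := emtMk_surjective τ d z
      obtain ⟨y, rfl⟩ := emtMk_surjective τ d w
      rw [emtD_mk]
      exact le_iSup₂_of_le (g ∘ emtMk τ d) hg le_rfl

lemma emtD_recover (z w : Quotient (emtSetoid τ d)) :
    emtD τ d z w = ⨆ g ∈ Lip1 (emtT τ d) (emtD τ d), ENNReal.ofReal |g z - g w| := by
  rw [emtLip1_eq]
  obtain ⟨x, rfl⟩ := emtMk_surjective τ d z
  obtain ⟨y, rfl⟩ := emtMk_surjective τ d w
  rw [emtD_mk]
  apply le_antisymm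
  · refine iSup₂_le fun f hf => ?_
    exact le_iSup₂_of_le (emtLift τ d f hf) (emtLift_mem τ d f hf) le_rfl
  · refine iSup₂_le fun g hg => ?_
    exact le_iSup₂_of_le (g ∘ emtMk τ d) hg le_rfl

lemma emtIsEMT (hd : IsExtPseudoDist d) : IsEMT (emtT τ d) (emtD τ d) := by
  refine ⟨⟨?_, ?_, ?_⟩, ?_, emtD_recover τ d⟩
  · intro z w
    constructor
    · intro h
      obtain ⟨x, rfl⟩ := emtMk_surjective τ d z
      obtain ⟨y, rfl⟩ := emtMk_surjective τ d w
      refine Quotient.sound fun f hf => ?_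
      have : ENNReal.ofReal |f x - f y| = 0 := by
        refine le_antisymm ?_ zero_le
        rw [← h, emtD_mk]
        exact le_iSup₂_of_le f hf le_rfl
      rw [ENNReal.ofReal_eq_zero] at this
      have := abs_nonpos_iff.mp this
      linarith [sub_eq_zero.mp this]
    · rintro rfl
      obtain ⟨x, rfl⟩ := emtMk_surjective τ d z
      rw [emtD_mk]
      refine le_antisymm (iSup₂_le fun f hf => ?_) zero_le
      simp
  · intro z w
    obtain ⟨x, rfl⟩ := emtMk_surjective τ d z
    obtain ⟨y, rfl⟩ := emtMk_surjective τ d w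
    rw [emtD_mk, emtD_mk]
    exact iSup_congr fun f => iSup_congr fun hf => by rw [abs_sub_comm]
  · intro z w v
    obtain ⟨x, rfl⟩ := emtMk_surjective τ d z
    obtain ⟨y, rfl⟩ := emtMk_surjective τ d w
    obtain ⟨u, rfl⟩ := emtMk_surjective τ d v
    rw [emtD_mk, emtD_mk, emtD_mk]
    refine iSup₂_le fun f hf => ?_
    calc ENNReal.ofReal |f x - f y|
        ≤ ENNReal.ofReal (|f x - f u| + |f u - f y|) :=
          ENNReal.ofReal_le_ofReal (abs_sub_le _ _ _)
      _ ≤ ENNReal.ofReal |f x - f u| + ENNReal.ofReal |f u - f y| :=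
          ENNReal.ofReal_add_le
      _ ≤ _ := add_le_add (le_iSup₂_of_le f hf le_rfl) (le_iSup₂_of_le f hf le_rfl)
  · rw [emtLip1_eq]; rfl

end EmtAux

/-- **The e.m.t.-fication.** For every pre-e.pm.t. space `(X,τ,d)` there exist an e.m.t.
space `(X̌,τ̌,ď)` and a surjective continuous-short map `c : (X,τ,d) → (X̌,τ̌,ď)` such that
every continuous-short map from `(X,τ,d)` into an e.m.t. space factors uniquely through `c`
via a continuous-short map; moreover, `ψ ↦ ψ ∘ c` is a bijection from the continuous-short
maps out of `(X̌,τ̌,ď)` onto the continuous-short maps out of `(X,τ,d)`. -/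
theorem emt_fication {X : Type u} (τ : TopologicalSpace X) (d : X → X → ℝ≥0∞)
    (hd : IsExtPseudoDist d) :
    ∃ (Z : Type u) (τZ : TopologicalSpace Z) (dZ : Z → Z → ℝ≥0∞) (c : X → Z),
      IsEMT τZ dZ ∧ Function.Surjective c ∧ ContinuousShort τ d τZ dZ c ∧
      (∀ (Y : Type v) (τY : TopologicalSpace Y) (dY : Y → Y → ℝ≥0∞), IsEMT τY dY →
        (∀ φ : X → Y, ContinuousShort τ d τY dY φ →
          ∃! ψ : Z → Y, ContinuousShort τZ dZ τY dY ψ ∧ ψ ∘ c = φ) ∧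
        Set.BijOn (fun ψ : Z → Y => ψ ∘ c)
          {ψ | ContinuousShort τZ dZ τY dY ψ} {φ | ContinuousShort τ d τY dY φ}) := by
  classical
  refine ⟨Quotient (emtSetoid τ d), emtT τ d, emtD τ d, emtMk τ d,
    emtIsEMT τ d hd, emtMk_surjective τ d, emtMk_cs τ d, ?_⟩
  intro Y τY dY hY
  -- existence & uniqueness of the lift
  have key : ∀ φ : X → Y, ContinuousShort τ d τY dY φ →
      ∃ ψ : Quotient (emtSetoid τ d) → Y,
        ContinuousShort (emtT τ d) (emtD τ d) τY dY ψ ∧ ψ ∘ emtMk τ d = φ := by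
    intro φ hφ
    -- every `h ∈ Lip1 τY dY` pulls back to `Lip1 τ d`
    have pull : ∀ h ∈ Lip1 τY dY, h ∘ φ ∈ Lip1 τ d := by
      rintro h ⟨hc, ⟨C, hC⟩, hl⟩
      exact ⟨@Continuous.comp X Y ℝ τ τY _ φ h hc hφ.1, ⟨C, fun x => hC _⟩,
        fun x y => (hl (φ x) (φ y)).trans (hφ.2 x y)⟩
    -- φ respects the equivalence
    have resp : ∀ a b : X, (emtSetoid τ d).r a b → φ a = φ b := by
      intro a b hab
      have h0 : dY (φ a) (φ b) = 0 := by
        rw [hY.2.2 (φ a) (φ b)]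
        refine le_antisymm (iSup₂_le fun h hh => ?_) zero_le
        have : h (φ a) = h (φ b) := hab (h ∘ φ) (pull h hh)
        simp [this]
      exact (hY.1.eq_zero_iff _ _).mp h0
    refine ⟨Quotient.lift φ resp, ⟨?_, ?_⟩, rfl⟩
    · -- continuity
      rw [continuous_iff_le_induced, hY.2.1, induced_iInf]
      refine le_iInf fun h => ?_
      rw [induced_iInf]
      refine le_iInf fun hh => ?_
      rw [induced_compose]
      have : h ∘ Quotient.lift φ resp ∈ emtG τ d := by
        show (h ∘ Quotient.lift φ resp) ∘ emtMk τ d ∈ Lip1 τ d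
        exact pull h hh
      exact iInf_le_of_le _ (iInf_le_of_le this le_rfl)
    · -- shortness
      intro z w
      obtain ⟨x, rfl⟩ := emtMk_surjective τ d z
      obtain ⟨y, rfl⟩ := emtMk_surjective τ d w
      show dY (φ x) (φ y) ≤ emtD τ d (emtMk τ d x) (emtMk τ d y)
      rw [emtD_mk, hY.2.2 (φ x) (φ y)]
      refine iSup₂_le fun h hh => ?_
      exact le_iSup₂_of_le (h ∘ φ) (pull h hh) le_rfl
  have uniq : ∀ ψ₁ ψ₂ : Quotient (emtSetoid τ d) → Y,
      ψ₁ ∘ emtMk τ d = ψ₂ ∘ emtMk τ d → ψ₁ = ψ₂ := by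
    intro ψ₁ ψ₂ h
    funext z
    obtain ⟨x, rfl⟩ := emtMk_surjective τ d z
    exact congrFun h x
  constructor
  · intro φ hφ
    obtain ⟨ψ, hψ, hc⟩ := key φ hφ
    exact ⟨ψ, ⟨hψ, hc⟩, fun ψ' ⟨_, hc'⟩ => uniq ψ' ψ (hc'.trans hc.symm)⟩
  · refine ⟨?_, ?_, ?_⟩
    · intro ψ hψ
      exact ⟨@Continuous.comp X (Quotient (emtSetoid τ d)) Y τ (emtT τ d) τY (emtMk τ d) ψ
          hψ.1 (emtMk_cs τ d).1,
        fun x y => (hψ.2 _ _).trans ((emtMk_cs τ d).2 x y)⟩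
    · intro ψ₁ _ ψ₂ _ h
      exact uniq ψ₁ ψ₂ h
    · intro φ hφ
      obtain ⟨ψ, hψ, hc⟩ := key φ hφ
      exact ⟨ψ, hψ, hc⟩
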